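/- Let K be a complex Hilbert space and let A, B be bounded linear operators on K such that |A + B| = |A| + |B|, where |T| denotes the positive square root of T*∘T. Then A + B has a Moore–Penrose inverse if and only if |A| + |B| has a Moore–Penrose inverse. -/

import Mathlib

open ContinuousLinearMap

variable {H : Type*} [NormedAddCommGroup H] [InnerProductSpace ℂ H] [CompleteSpace H]

/-- `X` is a Moore–Penrose inverse of `T`. -/
def IsMPInv (T X : H →L[ℂ] H) : Prop :=
  T ∘L X ∘L T = T ∧ X ∘L T ∘L X = X ∧
    adjoint (T ∘L X) = T ∘L X ∧ adjoint (X ∘L T) = X ∘L T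

private lemma isMPInv_iff' (T X : H →L[ℂ] H) :
    IsMPInv T X ↔ T * X * T = T ∧ X * T * X = X ∧
      star (T * X) = T * X ∧ star (X * T) = X * T := by
  simp only [IsMPInv, mul_def, star_eq_adjoint, comp_assoc]

/-- Norm identity from `S * S = T* ∘ T`. -/
private lemma aux_norm (T S : H →L[ℂ] H) (hS : star S = S)
    (h : S * S = star T * T) (w : H) : ‖T w‖ = ‖S w‖ := by
  have h1 : adjoint T (T w) = S (S w) := by
    have := congrFun (congrArg (DFunLike.coe) h) w
    simp only [mul_apply, star_eq_adjoint] at this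
    exact this.symm
  have key : (inner ℂ (T w) (T w) : ℂ) = inner ℂ (S w) (S w) := by
    calc (inner ℂ (T w) (T w) : ℂ) = inner ℂ w (adjoint T (T w)) :=
          (adjoint_inner_right T w (T w)).symm
      _ = inner ℂ w (adjoint S (S w)) := by rw [h1, ← star_eq_adjoint, hS]
      _ = inner ℂ (S w) (S w) := adjoint_inner_right S w (S w)
  rw [norm_eq_sqrt_re_inner (𝕜 := ℂ), norm_eq_sqrt_re_inner (𝕜 := ℂ), key]

/-- Kernel comparison: if `S * S = T* ∘ T` then `S ∘ C = 0` implies `T ∘ C = 0`. -/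
private lemma aux_ker (T S C : H →L[ℂ] H) (hS : star S = S)
    (h : S * S = star T * T) (hC : S * C = 0) : T * C = 0 := by
  ext v
  have hSC : S (C v) = 0 := by
    have := congrFun (congrArg (DFunLike.coe) hC) v
    simpa [mul_apply] using this
  have : ‖T (C v)‖ = 0 := by rw [aux_norm T S hS h, hSC, norm_zero]
  simpa [mul_apply] using norm_eq_zero.mp this

/-- If `S` is self-adjoint and `S ∘ S ∘ C = 0` then `S ∘ C = 0`. -/
private lemma aux_ker2 (S C : H →L[ℂ] H) (hS : star S = S)
    (hC : S * (S * C) = 0) : S * C = 0 := by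
  ext v
  have h0 : S (S (C v)) = 0 := by
    have := congrFun (congrArg (DFunLike.coe) hC) v
    simpa [mul_apply] using this
  have hinner : (inner ℂ (S (C v)) (S (C v)) : ℂ) = 0 := by
    calc (inner ℂ (S (C v)) (S (C v)) : ℂ)
        = inner ℂ (C v) (adjoint S (S (C v))) := (adjoint_inner_right S (C v) (S (C v))).symm
      _ = inner ℂ (C v) (S (S (C v))) := by rw [← star_eq_adjoint, hS]
      _ = 0 := by rw [h0, inner_zero_right]
  simpa [mul_apply] using inner_self_eq_zero.mp hinner

private lemma cancel_aux (a b : H →L[ℂ] H) (h : a * (1 - b) = 0) : a * b = a := by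
  rw [mul_sub, mul_one, sub_eq_zero] at h
  exact h.symm

/-- MP inverses pass to adjoints. -/
private lemma mp_star {T X : H →L[ℂ] H}
    (h : T * X * T = T ∧ X * T * X = X ∧ star (T * X) = T * X ∧ star (X * T) = X * T) :
    star T * star X * star T = star T ∧ star X * star T * star X = star X ∧
      star (star T * star X) = star T * star X ∧
      star (star X * star T) = star X * star T := by
  obtain ⟨h1, h2, h3, h4⟩ := h
  refine ⟨?_, ?_, ?_, ?_⟩
  · calc star T * star X * star T = star (T * (X * T)) := by
          simp only [star_mul]; try noncomm_ring
      _ = star (T * X * T) := by congr 1; try noncomm_ring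
      _ = star T := by rw [h1]
  · calc star X * star T * star X = star (X * (T * X)) := by
          simp only [star_mul]; try noncomm_ring
      _ = star (X * T * X) := by congr 1; try noncomm_ring
      _ = star X := by rw [h2]
  · calc star (star T * star X) = X * T := by rw [star_mul, star_star, star_star]
      _ = star (X * T) := h4.symm
      _ = star T * star X := star_mul _ _
  · calc star (star X * star T) = T * X := by rw [star_mul, star_star, star_star]
      _ = star (T * X) := h3.symm
      _ = star X * star T := star_mul _ _

/-- Uniqueness of the MP inverse. -/
private lemma mp_unique {S Y₁ Y₂ : H →L[ℂ] H}
    (hY₁ : S * Y₁ * S = S ∧ Y₁ * S * Y₁ = Y₁ ∧ star (S * Y₁) = S * Y₁ ∧ star (Y₁ * S) = Y₁ * S)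
    (hY₂ : S * Y₂ * S = S ∧ Y₂ * S * Y₂ = Y₂ ∧ star (S * Y₂) = S * Y₂ ∧ star (Y₂ * S) = Y₂ * S) :
    Y₁ = Y₂ := by
  obtain ⟨a1, a2, a3, a4⟩ := hY₁
  obtain ⟨b1, b2, b3, b4⟩ := hY₂
  have hA : S * Y₁ = S * Y₂ := by
    calc S * Y₁ = star (S * Y₁) := a3.symm
      _ = star ((S * Y₂ * S) * Y₁) := by rw [b1]
      _ = star ((S * Y₂) * (S * Y₁)) := by congr 1; try noncomm_ring
      _ = star (S * Y₁) * star (S * Y₂) := star_mul _ _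
      _ = (S * Y₁) * (S * Y₂) := by rw [a3, b3]
      _ = (S * Y₁ * S) * Y₂ := by noncomm_ring
      _ = S * Y₂ := by rw [a1]
  have hB : Y₁ * S = Y₂ * S := by
    calc Y₁ * S = star (Y₁ * S) := a4.symm
      _ = star (Y₁ * (S * Y₂ * S)) := by rw [b1]
      _ = star ((Y₁ * S) * (Y₂ * S)) := by congr 1; try noncomm_ring
      _ = star (Y₂ * S) * star (Y₁ * S) := star_mul _ _
      _ = (Y₂ * S) * (Y₁ * S) := by rw [a4, b4]
      _ = Y₂ * (S * Y₁ * S) := by noncomm_ring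
      _ = Y₂ * S := by rw [a1]
  calc Y₁ = Y₁ * S * Y₁ := a2.symm
    _ = Y₁ * (S * Y₁) := by noncomm_ring
    _ = Y₁ * (S * Y₂) := by rw [hA]
    _ = Y₁ * S * Y₂ := by noncomm_ring
    _ = Y₂ * S * Y₂ := by rw [hB]
    _ = Y₂ := b2

/-- Forward construction: from an MP inverse of `T`, one for `S`. -/
private lemma mp_fwd (T S X : H →L[ℂ] H) (hS : star S = S) (h2 : S * S = star T * T)
    (hX : T * X * T = T ∧ X * T * X = X ∧ star (T * X) = T * X ∧ star (X * T) = X * T) :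
    ∃ Y, S * Y * S = S ∧ Y * S * Y = Y ∧ star (S * Y) = S * Y ∧ star (Y * S) = Y * S := by
  obtain ⟨h1, hx2, h3, h4⟩ := hX
  have hQ : X * star X * S * S = X * T := by
    calc X * star X * S * S = X * (star X * (S * S)) := by noncomm_ring
      _ = X * (star X * (star T * T)) := by rw [h2]
      _ = X * (star X * star T * T) := by noncomm_ring
      _ = X * (star (T * X) * T) := by rw [← star_mul]
      _ = X * (T * X * T) := by rw [h3]
      _ = X * T := by rw [h1]
  have hSQ : S * (X * T) = S := by
    apply cancel_aux
    apply aux_ker2 S _ hS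
    have hT0 : T * (1 - X * T) = 0 := by
      rw [mul_sub, mul_one, ← mul_assoc, h1, sub_self]
    calc S * (S * (1 - X * T)) = (S * S) * (1 - X * T) := by noncomm_ring
      _ = star T * (T * (1 - X * T)) := by rw [h2, mul_assoc]
      _ = star T * 0 := by rw [hT0]
      _ = 0 := mul_zero _
  refine ⟨X * star X * S, ?_, ?_, ?_, ?_⟩
  · calc S * (X * star X * S) * S = S * (X * star X * S * S) := by noncomm_ring
      _ = S * (X * T) := by rw [hQ]
      _ = S := hSQ
  · calc (X * star X * S) * S * (X * star X * S)
        = (X * star X * S * S) * (X * star X * S) := by noncomm_ring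
      _ = (X * T) * (X * star X * S) := by rw [hQ]
      _ = (X * T * X) * (star X * S) := by noncomm_ring
      _ = X * (star X * S) := by rw [hx2]
      _ = X * star X * S := by noncomm_ring
  · calc star (S * (X * star X * S))
        = star S * (star (star X) * star X) * star S := by
          simp only [star_mul]; try noncomm_ring
      _ = S * (X * star X * S) := by rw [star_star, hS]; try noncomm_ring
  · calc star (X * star X * S * S) = star (X * T) := by rw [hQ]
      _ = X * T := h4
      _ = X * star X * S * S := hQ.symm
      _ = (X * star X * S) * S := by noncomm_ring

/-- Backward construction: from an MP inverse of `S`, one for `T`. -/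
private lemma mp_bwd (T S Y : H →L[ℂ] H) (hS : star S = S) (h2 : S * S = star T * T)
    (hY : S * Y * S = S ∧ Y * S * Y = Y ∧ star (S * Y) = S * Y ∧ star (Y * S) = Y * S) :
    ∃ X, T * X * T = T ∧ X * T * X = X ∧ star (T * X) = T * X ∧ star (X * T) = X * T := by
  obtain ⟨h1, hy2, h3, h4⟩ := hY
  have hYs : star Y = Y := by
    have hstar := mp_star (T := S) (X := Y) ⟨h1, hy2, h3, h4⟩
    rw [hS] at hstar
    exact mp_unique hstar ⟨h1, hy2, h3, h4⟩
  have hcomm : Y * S = S * Y := by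
    calc Y * S = star (Y * S) := h4.symm
      _ = star S * star Y := star_mul _ _
      _ = S * Y := by rw [hS, hYs]
  have hYYSS : Y * Y * (S * S) = Y * S := by
    calc Y * Y * (S * S) = Y * (Y * S) * S := by noncomm_ring
      _ = Y * (S * Y) * S := by rw [hcomm]
      _ = (Y * S * Y) * S := by noncomm_ring
      _ = Y * S := by rw [hy2]
  have hTYS : T * (Y * S) = T := by
    apply cancel_aux
    apply aux_ker T S _ hS h2
    rw [mul_sub, mul_one, ← mul_assoc, h1, sub_self]
  refine ⟨Y * Y * star T, ?_, ?_, ?_, ?_⟩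
  · calc T * (Y * Y * star T) * T = T * (Y * Y * (star T * T)) := by noncomm_ring
      _ = T * (Y * Y * (S * S)) := by rw [h2]
      _ = T * (Y * S) := by rw [hYYSS]
      _ = T := hTYS
  · calc (Y * Y * star T) * T * (Y * Y * star T)
        = (Y * Y * (star T * T)) * (Y * Y * star T) := by noncomm_ring
      _ = (Y * Y * (S * S)) * (Y * Y * star T) := by rw [h2]
      _ = (Y * S) * (Y * Y * star T) := by rw [hYYSS]
      _ = (Y * S * Y) * (Y * star T) := by noncomm_ring
      _ = Y * (Y * star T) := by rw [hy2]
      _ = Y * Y * star T := by noncomm_ring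
  · calc star (T * (Y * Y * star T))
        = T * (star Y * star Y * star T) := by
          simp only [star_mul, star_star]; try noncomm_ring
      _ = T * (Y * Y * star T) := by rw [hYs]
  · calc star ((Y * Y * star T) * T) = star (Y * Y * (star T * T)) := by congr 1; try noncomm_ring
      _ = star (Y * Y * (S * S)) := by rw [h2]
      _ = star (Y * S) := by rw [hYYSS]
      _ = Y * S := h4
      _ = Y * Y * (S * S) := hYYSS.symm
      _ = Y * Y * (star T * T) := by rw [h2]
      _ = (Y * Y * star T) * T := by noncomm_ring

/-- If `|A + B| = |A| + |B|`, then `A + B` is M-P invertible iff `|A| + |B|` is. -/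
theorem mp_invertible_iff_abs (A B sA sB sAB : H →L[ℂ] H)
    (hsA : sA.IsPositive) (hsA2 : sA ∘L sA = adjoint A ∘L A)
    (hsB : sB.IsPositive) (hsB2 : sB ∘L sB = adjoint B ∘L B)
    (hsAB : sAB.IsPositive) (hsAB2 : sAB ∘L sAB = adjoint (A + B) ∘L (A + B))
    (habs : sAB = sA + sB) :
    (∃ X, IsMPInv (A + B) X) ↔ (∃ Y, IsMPInv (sA + sB) Y) := by
  subst habs
  set T := A + B with hT
  set S := sA + sB with hSdef
  have hS : star S = S := hsAB.isSelfAdjoint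
  have h2 : S * S = star T * T := by
    simpa only [mul_def, star_eq_adjoint] using hsAB2
  constructor
  · rintro ⟨X, hX⟩
    obtain ⟨Y, hY⟩ := mp_fwd T S X hS h2 ((isMPInv_iff' T X).mp hX)
    exact ⟨Y, (isMPInv_iff' S Y).mpr hY⟩
  · rintro ⟨Y, hY⟩
    obtain ⟨X, hX⟩ := mp_bwd T S Y hS h2 ((isMPInv_iff' S Y).mp hY)
    exact ⟨X, (isMPInv_iff' T X).mpr hX⟩
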